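/- For every nonnegative integer a and real x with |x| ≤ 1, arcsin^(2a+1)(x)/(2a+1)! = Σ_{n=0}^∞ (C(2n,n)/((2n+1)4^n)) x^(2n+1) Σ_{0 ≤ n₁ < ... < n_a < n} 1/((2n₁+1)² ⋯ (2n_a+1)²), where for a = 0 the inner sum is 1. -/

import Mathlib

open Real

/-- `∑_{0 ≤ n₁ < ⋯ < n_a < n} 1/((2n₁+1)² ⋯ (2n_a+1)²)`; equals `1` when `a = 0`. -/
noncomputable def tHead (a n : ℕ) : ℝ :=
  ∑' f : {f : Fin a → ℕ // StrictMono f ∧ ∀ i, f i < n},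
    ∏ i, 1 / (2 * (f.1 i : ℝ) + 1) ^ 2

namespace ArcsinAux

/-- weight -/
noncomputable def w (k : ℕ) : ℝ := 1 / (2 * (k : ℝ) + 1) ^ 2

/-- finset version of `tHead` -/
noncomputable def T (a n : ℕ) : ℝ :=
  ∑ s ∈ Finset.powersetCard a (Finset.range n), ∏ k ∈ s, w k

/-- normalized central binomial -/
noncomputable def Bb (n : ℕ) : ℝ := (Nat.choose (2 * n) n : ℝ) / 4 ^ n

/-- arcsin series coefficient -/
noncomputable def bb (n : ℕ) : ℝ := (Nat.choose (2 * n) n : ℝ) / ((2 * (n : ℝ) + 1) * 4 ^ n)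

/-- coefficient of the `a`-th series -/
noncomputable def cc (a n : ℕ) : ℝ := bb n * T a n

/-- predecessor coefficient -/
noncomputable def ccp (a n : ℕ) : ℝ := if a = 0 then 0 else cc (a - 1) n

noncomputable def F (a : ℕ) (x : ℝ) : ℝ := ∑' n : ℕ, cc a n * x ^ (2 * n + 1)

noncomputable def F1 (a : ℕ) (x : ℝ) : ℝ :=
  ∑' n : ℕ, cc a n * ((2 * (n : ℝ) + 1) * x ^ (2 * n))

noncomputable def F2 (a : ℕ) (x : ℝ) : ℝ :=
  ∑' n : ℕ, cc a n * ((2 * (n : ℝ) + 1) * ((2 * (n : ℝ)) * x ^ (2 * n - 1)))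

noncomputable def Fp (a : ℕ) (x : ℝ) : ℝ := ∑' n : ℕ, ccp a n * x ^ (2 * n + 1)

noncomputable def S (a : ℕ) (x : ℝ) : ℝ :=
  Real.arcsin x ^ (2 * a + 1) / (Nat.factorial (2 * a + 1))

noncomputable def S1 (a : ℕ) (x : ℝ) : ℝ :=
  Real.arcsin x ^ (2 * a) / (Nat.factorial (2 * a)) * (Real.sqrt (1 - x ^ 2))⁻¹

noncomputable def S2 (a : ℕ) (x : ℝ) : ℝ :=
  (if a = 0 then 0 else Real.arcsin x ^ (2 * a - 1) / (Nat.factorial (2 * a - 1))) * (1 - x ^ 2)⁻¹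
    + Real.arcsin x ^ (2 * a) / (Nat.factorial (2 * a)) *
        (x / (Real.sqrt (1 - x ^ 2) * (1 - x ^ 2)))

noncomputable def Sp (a : ℕ) (x : ℝ) : ℝ := if a = 0 then 0 else S (a - 1) x

/- ### combinatorial facts about T -/

lemma w_nonneg (k : ℕ) : 0 ≤ w k := by unfold w; positivity

lemma T_zero (n : ℕ) : T 0 n = 1 := by
  simp [T]

lemma T_succ_zero (a : ℕ) : T (a + 1) 0 = 0 := by
  rw [T, show Finset.range 0 = ∅ from rfl,
    Finset.powersetCard_eq_empty.2 (by simp), Finset.sum_empty]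

lemma T_rec (a n : ℕ) : T (a + 1) (n + 1) = T (a + 1) n + w n * T a n := by
  classical
  have hnot : n ∉ Finset.range n := by simp
  rw [T, Finset.range_add_one, Finset.powersetCard_succ_insert hnot,
    Finset.sum_union, T]
  · congr 1
    rw [Finset.sum_image, T, Finset.mul_sum]
    · apply Finset.sum_congr rfl
      intro s hs
      have hns : n ∉ s := fun hn => hnot
        ((Finset.mem_powersetCard.1 hs).1 hn)
      rw [Finset.prod_insert hns]
    · intro s hs t ht hst
      have hns : n ∉ s := fun hn => hnot ((Finset.mem_powersetCard.1 hs).1 hn)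
      have hnt : n ∉ t := fun hn => hnot ((Finset.mem_powersetCard.1 ht).1 hn)
      have := congrArg (fun u => Finset.erase u n) hst
      simpa [Finset.erase_insert, hns, hnt] using this
  · rw [Finset.disjoint_left]
    intro s hs hs'
    have hns : n ∉ s := fun hn => hnot ((Finset.mem_powersetCard.1 hs).1 hn)
    rcases Finset.mem_image.1 hs' with ⟨t, _, rfl⟩
    exact hns (Finset.mem_insert_self n t)

lemma T_sum (a n : ℕ) : T (a + 1) n = ∑ m ∈ Finset.range n, w m * T a m := by
  induction n with
  | zero => simp [T_succ_zero]
  | succ n ih => rw [T_rec, ih, Finset.sum_range_succ]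

lemma T_nonneg (a n : ℕ) : 0 ≤ T a n := by
  apply Finset.sum_nonneg
  intro s _
  exact Finset.prod_nonneg fun k _ => w_nonneg k

lemma w_sum_le (n : ℕ) : ∑ m ∈ Finset.range n, w m ≤ 2 - 2 / ((n : ℝ) + 1) := by
  induction n with
  | zero => norm_num
  | succ n ih =>
    rw [Finset.sum_range_succ]
    have h1 : (0:ℝ) < (n:ℝ) + 1 := by positivity
    have h2 : (0:ℝ) < (n:ℝ) + 2 := by positivity
    have h3 : (0:ℝ) < (2 * (n:ℝ) + 1) ^ 2 := by positivity
    have key : w n ≤ 2 / ((n:ℝ) + 1) - 2 / ((n:ℝ) + 2) := by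
      have he : 2 / ((n:ℝ) + 1) - 2 / ((n:ℝ) + 2) = 2 / (((n:ℝ) + 1) * ((n:ℝ) + 2)) := by
        field_simp
        ring
      rw [he, w, div_le_div_iff₀ h3 (by positivity)]
      nlinarith [sq_nonneg ((n:ℝ))]
    push_cast
    rw [show ((n:ℝ) + 1 + 1) = (n:ℝ) + 2 from by ring]
    linarith

lemma T_le (a n : ℕ) : T a n ≤ 2 ^ a := by
  induction a generalizing n with
  | zero => rw [T_zero]; norm_num
  | succ a ih =>
    rw [T_sum]
    calc ∑ m ∈ Finset.range n, w m * T a m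
        ≤ ∑ m ∈ Finset.range n, w m * 2 ^ a := by
          apply Finset.sum_le_sum
          intro m _
          exact mul_le_mul_of_nonneg_left (ih m) (w_nonneg m)
      _ = (∑ m ∈ Finset.range n, w m) * 2 ^ a := by rw [Finset.sum_mul]
      _ ≤ 2 * 2 ^ a := by
          apply mul_le_mul_of_nonneg_right _ (by positivity)
          calc ∑ m ∈ Finset.range n, w m ≤ 2 - 2 / ((n : ℝ) + 1) := w_sum_le n
            _ ≤ 2 := by
                have : (0:ℝ) < (n:ℝ) + 1 := by positivity
                have : 0 ≤ 2 / ((n:ℝ) + 1) := by positivity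
                linarith
      _ = 2 ^ (a + 1) := by ring

lemma tHead_eq_T (a n : ℕ) : tHead a n = T a n := by
  classical
  letI : Fintype {f : Fin a → ℕ // StrictMono f ∧ ∀ i, f i < n} :=
    Fintype.ofInjective
      (fun f => (fun i => (⟨f.1 i, f.2.2 i⟩ : Fin n)) : _ → (Fin a → Fin n))
      (by
        intro f g h
        apply Subtype.ext
        funext i
        exact congrArg Fin.val (congrFun h i))
  rw [tHead, tsum_fintype, T]
  refine Finset.sum_bij (fun f _ => Finset.image f.1 Finset.univ) ?_ ?_ ?_ ?_
  · intro f _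
    rw [Finset.mem_powersetCard]
    constructor
    · intro k hk
      rcases Finset.mem_image.1 hk with ⟨i, _, rfl⟩
      exact Finset.mem_range.2 (f.2.2 i)
    · rw [Finset.card_image_of_injective _ f.2.1.injective, Finset.card_univ,
        Fintype.card_fin]
  · intro f _ g _ hfg
    have hcf : (Finset.image f.1 Finset.univ).card = a := by
      rw [Finset.card_image_of_injective _ f.2.1.injective, Finset.card_univ,
        Fintype.card_fin]
    have hcg : (Finset.image g.1 Finset.univ).card = a := by
      rw [Finset.card_image_of_injective _ g.2.1.injective, Finset.card_univ,
        Fintype.card_fin]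
    have hmem : ∀ i, f.1 i ∈ Finset.image g.1 Finset.univ := by
      intro i
      have : f.1 i ∈ Finset.image f.1 Finset.univ :=
        Finset.mem_image_of_mem _ (Finset.mem_univ i)
      simpa [hfg] using this
    have h1 : f.1 = (Finset.image g.1 Finset.univ).orderEmbOfFin hcg :=
      Finset.orderEmbOfFin_unique hcg hmem f.2.1
    have h2 : g.1 = (Finset.image g.1 Finset.univ).orderEmbOfFin hcg :=
      Finset.orderEmbOfFin_unique hcg
        (fun i => Finset.mem_image_of_mem _ (Finset.mem_univ i)) g.2.1
    exact Subtype.ext (h1.trans h2.symm)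
  · intro s hs
    rw [Finset.mem_powersetCard] at hs
    obtain ⟨hsub, hcard⟩ := hs
    refine ⟨⟨fun i => s.orderEmbOfFin hcard i, (s.orderEmbOfFin hcard).strictMono, ?_⟩,
      Finset.mem_univ _, ?_⟩
    · intro i
      exact Finset.mem_range.1 (hsub (Finset.orderEmbOfFin_mem s hcard i))
    · apply Finset.eq_of_subset_of_card_le
      · intro k hk
        rcases Finset.mem_image.1 hk with ⟨i, _, rfl⟩
        exact Finset.orderEmbOfFin_mem s hcard i
      · rw [Finset.card_image_of_injective _ (s.orderEmbOfFin hcard).strictMono.injective,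
          Finset.card_univ, Fintype.card_fin, hcard]
  · intro f _
    rw [Finset.prod_image (fun i _ j _ h => f.2.1.injective h)]
    rfl

/- ### coefficient facts -/

lemma Bb_nonneg (n : ℕ) : 0 ≤ Bb n := by unfold Bb; positivity

lemma Bb_rec (n : ℕ) : Bb (n + 1) = Bb n * ((2 * (n : ℝ) + 1) / (2 * (n : ℝ) + 2)) := by
  have h := Nat.succ_mul_centralBinom_succ n
  have hc : ((n : ℝ) + 1) * (Nat.centralBinom (n + 1) : ℝ)
      = 2 * (2 * (n : ℝ) + 1) * (Nat.centralBinom n : ℝ) := by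
    exact_mod_cast congrArg (fun m : ℕ => (m : ℝ)) h
  have hb : ∀ m : ℕ, (Nat.centralBinom m : ℝ) = (Nat.choose (2 * m) m : ℝ) := by
    intro m; rfl
  rw [hb, hb] at hc
  have hn1 : ((n : ℝ) + 1) ≠ 0 := by positivity
  rw [Bb, Bb]
  rw [div_mul_div_comm]
  rw [div_eq_div_iff (by positivity) (by positivity)]
  have h2 : (Nat.choose (2 * (n + 1)) (n + 1) : ℝ)
      = 2 * (2 * (n : ℝ) + 1) * (Nat.choose (2 * n) n : ℝ) / ((n : ℝ) + 1) := by
    rw [eq_div_iff hn1]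
    linarith [hc]
  rw [h2]
  field_simp
  ring

lemma Bb_sq (n : ℕ) : Bb n ^ 2 * (2 * (n : ℝ) + 1) ≤ 1 := by
  induction n with
  | zero => simp [Bb]
  | succ n ih =>
    rw [Bb_rec]
    have h1 : (0:ℝ) < 2 * (n:ℝ) + 2 := by positivity
    have h2 : Bb n ^ 2 * (2 * (n:ℝ) + 1) ^ 2 * (2 * (n:ℝ) + 3)
        ≤ (2 * (n:ℝ) + 2) ^ 2 := by
      have h3 : (2 * (n:ℝ) + 1) * (2 * (n:ℝ) + 3) ≤ (2 * (n:ℝ) + 2) ^ 2 := by nlinarith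
      nlinarith [mul_le_mul_of_nonneg_right ih
        (show (0:ℝ) ≤ (2 * (n:ℝ) + 1) * (2 * (n:ℝ) + 3) by positivity),
        sq_nonneg (Bb n), Bb_nonneg n]
    push_cast
    rw [mul_pow, div_pow]
    rw [show Bb n ^ 2 * ((2 * (n:ℝ) + 1) ^ 2 / (2 * (n:ℝ) + 2) ^ 2) * (2 * ((n:ℝ) + 1) + 1)
      = Bb n ^ 2 * (2 * (n:ℝ) + 1) ^ 2 * (2 * (n:ℝ) + 3) / (2 * (n:ℝ) + 2) ^ 2 from by ring]
    rw [div_le_one (by positivity)]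
    exact h2

lemma bb_eq (n : ℕ) : bb n = Bb n / (2 * (n : ℝ) + 1) := by
  rw [bb, Bb, div_div, mul_comm ((4:ℝ)^n)]

lemma bb_nonneg (n : ℕ) : 0 ≤ bb n := by
  rw [bb_eq]
  have := Bb_nonneg n
  positivity

lemma bb_sq_le (n : ℕ) : bb n ^ 2 ≤ 1 / ((n : ℝ) + 1) ^ 3 := by
  have hd : (0:ℝ) < 2 * (n:ℝ) + 1 := by positivity
  have h1 : bb n ^ 2 ≤ 1 / (2 * (n:ℝ) + 1) ^ 3 := by
    rw [bb_eq, div_pow, div_le_div_iff₀ (by positivity) (by positivity)]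
    calc Bb n ^ 2 * (2 * (n:ℝ) + 1) ^ 3
        = (Bb n ^ 2 * (2 * (n:ℝ) + 1)) * (2 * (n:ℝ) + 1) ^ 2 := by ring
      _ ≤ 1 * (2 * (n:ℝ) + 1) ^ 2 := by
          exact mul_le_mul_of_nonneg_right (Bb_sq n) (by positivity)
      _ = 1 * (2 * (n:ℝ) + 1) ^ 2 := by ring
  refine h1.trans ?_
  rw [div_le_div_iff₀ (by positivity) (by positivity)]
  have : ((n:ℝ) + 1) ^ 3 ≤ (2 * (n:ℝ) + 1) ^ 3 := by
    apply pow_le_pow_left₀ (by positivity) (by linarith [Nat.cast_nonneg (α := ℝ) n])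
  linarith

lemma bb_le_one (n : ℕ) : bb n ≤ 1 := by
  have h1 : (1:ℝ) ≤ ((n:ℝ) + 1) ^ 3 := by have h0 : (0:ℝ) ≤ (n:ℝ) := Nat.cast_nonneg n; nlinarith [sq_nonneg ((n:ℝ))]
  have h2 : bb n ^ 2 ≤ 1 := le_trans (bb_sq_le n) (by
    rw [div_le_one (by positivity)]; exact h1)
  nlinarith [bb_nonneg n]

lemma bb_le (n : ℕ) : bb n ≤ ((n : ℝ) + 1) ^ (-(3/2) : ℝ) := by
  have ht : (0:ℝ) < (n:ℝ) + 1 := by positivity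
  have hr : (0:ℝ) < ((n:ℝ) + 1) ^ (-(3/2) : ℝ) := Real.rpow_pos_of_pos ht _
  have hsq : (((n:ℝ) + 1) ^ (-(3/2) : ℝ)) ^ 2 = 1 / ((n:ℝ) + 1) ^ 3 := by
    rw [sq, ← Real.rpow_add ht]
    rw [show (-(3/2) : ℝ) + -(3/2) = -((3:ℕ):ℝ) from by norm_num]
    rw [Real.rpow_neg ht.le, Real.rpow_natCast, one_div]
  nlinarith [bb_sq_le n, bb_nonneg n, hr, hsq]

lemma summable_bb : Summable bb := by
  have h0 : Summable (fun n : ℕ => ((n : ℝ)) ^ (-(3/2) : ℝ)) := by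
    rw [Real.summable_nat_rpow]
    norm_num
  have h : Summable (fun n : ℕ => ((n : ℝ) + 1) ^ (-(3/2) : ℝ)) := by
    have := (summable_nat_add_iff (f := fun n : ℕ => ((n : ℝ)) ^ (-(3/2) : ℝ)) 1).2 h0
    refine this.congr fun n => ?_
    push_cast
    ring_nf
  exact Summable.of_nonneg_of_le bb_nonneg bb_le h

lemma cc_nonneg (a n : ℕ) : 0 ≤ cc a n := mul_nonneg (bb_nonneg n) (T_nonneg a n)

lemma cc_le (a n : ℕ) : cc a n ≤ 2 ^ a := by
  calc cc a n ≤ 1 * T a n := by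
        exact mul_le_mul_of_nonneg_right (bb_le_one n) (T_nonneg a n)
    _ = T a n := one_mul _
    _ ≤ 2 ^ a := T_le a n

lemma summable_cc (a : ℕ) : Summable (cc a) := by
  apply Summable.of_nonneg_of_le (cc_nonneg a) (fun n => ?_) (summable_bb.mul_left (2 ^ a))
  calc cc a n = bb n * T a n := rfl
    _ ≤ bb n * 2 ^ a := mul_le_mul_of_nonneg_left (T_le a n) (bb_nonneg n)
    _ = 2 ^ a * bb n := mul_comm _ _

lemma bb_zero : bb 0 = 1 := by simp [bb]

lemma cc_zero (a : ℕ) : cc a 0 = if a = 0 then 1 else 0 := by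
  cases a with
  | zero => simp [cc, bb_zero, T_zero]
  | succ a => simp [cc, bb_zero, T_succ_zero]

lemma bb_rec (n : ℕ) :
    bb (n + 1) * ((2 * (n : ℝ) + 2) * (2 * (n : ℝ) + 3)) = bb n * (2 * (n : ℝ) + 1) ^ 2 := by
  have h1 : (0:ℝ) < 2 * (n:ℝ) + 1 := by positivity
  have h2 : (0:ℝ) < 2 * (n:ℝ) + 2 := by positivity
  have h3 : (0:ℝ) < 2 * (n:ℝ) + 3 := by positivity
  rw [bb_eq, bb_eq, Bb_rec]
  rw [show 2 * ((n + 1 : ℕ):ℝ) + 1 = 2 * (n:ℝ) + 3 from by push_cast; ring]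
  field_simp

lemma cc_rec (a n : ℕ) :
    cc a (n + 1) * ((2 * (n : ℝ) + 2) * (2 * (n : ℝ) + 3)) =
      cc a n * (2 * (n : ℝ) + 1) ^ 2 + ccp a n := by
  cases a with
  | zero =>
    rw [cc, cc, ccp, if_pos rfl, T_zero, T_zero, mul_one, mul_one, add_zero, bb_rec]
  | succ a =>
    rw [cc, cc, ccp, if_neg (Nat.succ_ne_zero a), T_rec]
    have hw : w n * (2 * (n:ℝ) + 1) ^ 2 = 1 := by
      rw [w]
      field_simp
    calc bb (n + 1) * (T (a + 1) n + w n * T a n) * ((2 * (n:ℝ) + 2) * (2 * (n:ℝ) + 3))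
        = bb (n + 1) * ((2 * (n:ℝ) + 2) * (2 * (n:ℝ) + 3)) * (T (a + 1) n + w n * T a n) := by
          ring
      _ = bb n * (2 * (n:ℝ) + 1) ^ 2 * (T (a + 1) n + w n * T a n) := by rw [bb_rec]
      _ = bb n * T (a + 1) n * (2 * (n:ℝ) + 1) ^ 2
            + (w n * (2 * (n:ℝ) + 1) ^ 2) * (bb n * T a n) := by ring
      _ = bb n * T (a + 1) n * (2 * (n:ℝ) + 1) ^ 2 + bb n * T a n := by rw [hw, one_mul]
      _ = cc (a + 1) n * (2 * (n:ℝ) + 1) ^ 2 + cc (a + 1 - 1) n := by rw [cc, cc]; norm_num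


/- ### summability -/

lemma summable_np1 (k : ℕ) {q : ℝ} (hq : |q| < 1) :
    Summable (fun n : ℕ => ((n : ℝ) + 1) ^ k * q ^ n) := by
  have h : ∀ n : ℕ, ((n : ℝ) + 1) ^ k * q ^ n
      = ∑ j ∈ Finset.range (k + 1), (k.choose j : ℝ) * ((n : ℝ) ^ j * q ^ n) := by
    intro n
    rw [add_pow, Finset.sum_mul]
    apply Finset.sum_congr rfl
    intro j _
    ring
  apply Summable.congr _ (fun n => (h n).symm)
  apply summable_sum
  intro j _
  exact (summable_pow_mul_geometric_of_norm_lt_one (R := ℝ) j (by rwa [Real.norm_eq_abs])).mul_left _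

lemma sq_abs_lt {r : ℝ} (hr : |r| < 1) : |r ^ 2| < 1 := by
  rw [abs_pow]
  exact pow_lt_one₀ (abs_nonneg r) hr two_ne_zero

lemma u1_summable {r : ℝ} (hr : |r| < 1) (a : ℕ) :
    Summable (fun n : ℕ => (2:ℝ) ^ a * (2 * (((n : ℝ) + 1) ^ 1 * (r ^ 2) ^ n))) :=
  ((summable_np1 1 (sq_abs_lt hr)).mul_left 2).mul_left ((2:ℝ) ^ a)

lemma bound1 (a : ℕ) {r : ℝ} (n : ℕ) {y : ℝ} (hy : |y| ≤ r) :
    ‖cc a n * ((2 * (n : ℝ) + 1) * y ^ (2 * n))‖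
      ≤ (2:ℝ) ^ a * (2 * (((n : ℝ) + 1) ^ 1 * (r ^ 2) ^ n)) := by
  have h0 : (0:ℝ) ≤ r := le_trans (abs_nonneg y) hy
  have h1 : |y| ^ (2 * n) ≤ r ^ (2 * n) := pow_le_pow_left₀ (abs_nonneg y) hy _
  have h2 : r ^ (2 * n) = (r ^ 2) ^ n := by rw [← pow_mul]
  rw [Real.norm_eq_abs, abs_mul, abs_mul, abs_pow,
    abs_of_nonneg (cc_nonneg a n), abs_of_nonneg (show (0:ℝ) ≤ 2 * (n:ℝ) + 1 by positivity)]
  calc cc a n * ((2 * (n:ℝ) + 1) * |y| ^ (2 * n))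
      ≤ 2 ^ a * ((2 * ((n:ℝ) + 1)) * (r ^ 2) ^ n) := by
        apply mul_le_mul (cc_le a n) _ (by positivity) (by positivity)
        rw [← h2]
        exact mul_le_mul (by linarith) h1 (by positivity) (by linarith [Nat.cast_nonneg (α := ℝ) n])
    _ = 2 ^ a * (2 * (((n:ℝ) + 1) ^ 1 * (r ^ 2) ^ n)) := by ring

lemma u2_summable {r : ℝ} (hr : |r| < 1) (a : ℕ) :
    Summable (fun n : ℕ => (2:ℝ) ^ a * (8 * (((n : ℝ) + 1) ^ 2 * (r ^ 2) ^ n)) / r) :=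
  (((summable_np1 2 (sq_abs_lt hr)).mul_left 8).mul_left ((2:ℝ) ^ a)).div_const r

lemma bound2 (a : ℕ) {r : ℝ} (hr0 : 0 < r) (n : ℕ) {y : ℝ} (hy : |y| ≤ r) :
    ‖cc a n * ((2 * (n : ℝ) + 1) * ((2 * (n : ℝ)) * y ^ (2 * n - 1)))‖
      ≤ (2:ℝ) ^ a * (8 * (((n : ℝ) + 1) ^ 2 * (r ^ 2) ^ n)) / r := by
  cases n with
  | zero =>
    have h : cc a 0 * ((2 * ((0:ℕ):ℝ) + 1) * ((2 * ((0:ℕ):ℝ)) * y ^ (2 * 0 - 1))) = 0 := by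
      norm_num
    rw [h, norm_zero]
    positivity
  | succ m =>
    set n := m + 1
    have hn1 : 1 ≤ n := Nat.le_add_left 1 m
    have h1 : |y| ^ (2 * n - 1) ≤ r ^ (2 * n - 1) := pow_le_pow_left₀ (abs_nonneg y) hy _
    have h2 : r ^ (2 * n - 1) = (r ^ 2) ^ n / r := by
      rw [eq_div_iff (ne_of_gt hr0), ← pow_mul, ← pow_succ,
        show 2 * n - 1 + 1 = 2 * n from by omega]
    rw [Real.norm_eq_abs, abs_mul, abs_mul, abs_mul, abs_pow,
      abs_of_nonneg (cc_nonneg a n),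
      abs_of_nonneg (show (0:ℝ) ≤ 2 * (n:ℝ) + 1 by positivity),
      abs_of_nonneg (show (0:ℝ) ≤ 2 * (n:ℝ) by positivity)]
    have hq0 : (0:ℝ) ≤ (r ^ 2) ^ n := by positivity
    calc cc a n * ((2 * (n:ℝ) + 1) * ((2 * (n:ℝ)) * |y| ^ (2 * n - 1)))
        ≤ 2 ^ a * ((2 * (n:ℝ) + 1) * ((2 * (n:ℝ)) * ((r ^ 2) ^ n / r))) := by
          apply mul_le_mul (cc_le a n) _ (by positivity) (by positivity)
          apply mul_le_mul_of_nonneg_left _ (by positivity)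
          apply mul_le_mul_of_nonneg_left _ (by positivity)
          rw [← h2]
          exact h1
      _ = 2 ^ a * ((2 * (n:ℝ) + 1) * (2 * (n:ℝ)) * (r ^ 2) ^ n) / r := by ring
      _ ≤ 2 ^ a * (8 * (((n:ℝ) + 1) ^ 2 * (r ^ 2) ^ n)) / r := by
          apply div_le_div_of_nonneg_right ?_ hr0.le
          apply mul_le_mul_of_nonneg_left _ (by positivity)
          rw [show (8:ℝ) * (((n:ℝ) + 1) ^ 2 * (r ^ 2) ^ n) = 8 * ((n:ℝ) + 1) ^ 2 * (r ^ 2) ^ n from by ring]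
          apply mul_le_mul_of_nonneg_right _ hq0
          nlinarith [Nat.cast_nonneg (α := ℝ) n]

lemma summable_F_terms (a : ℕ) {x : ℝ} (hx : |x| ≤ 1) :
    Summable (fun n : ℕ => cc a n * x ^ (2 * n + 1)) := by
  have hb : ∀ n : ℕ, ‖cc a n * x ^ (2 * n + 1)‖ ≤ cc a n := by
    intro n
    rw [Real.norm_eq_abs, abs_mul, abs_pow, abs_of_nonneg (cc_nonneg a n)]
    calc cc a n * |x| ^ (2 * n + 1) ≤ cc a n * 1 := by
          exact mul_le_mul_of_nonneg_left (pow_le_one₀ (abs_nonneg x) hx) (cc_nonneg a n)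
      _ = cc a n := mul_one _
  exact Summable.of_norm (Summable.of_nonneg_of_le (fun n => norm_nonneg _) hb (summable_cc a))

lemma summable_F1_terms (a : ℕ) {x : ℝ} (hx : |x| < 1) :
    Summable (fun n : ℕ => cc a n * ((2 * (n : ℝ) + 1) * x ^ (2 * n))) :=
  Summable.of_norm (Summable.of_nonneg_of_le (fun n => norm_nonneg _)
    (fun n => bound1 a n (le_refl |x|)) (u1_summable (by rwa [abs_abs]) a))

lemma summable_F2_terms (a : ℕ) {x : ℝ} (hx : |x| < 1) :
    Summable (fun n : ℕ => cc a n * ((2 * (n : ℝ) + 1) * ((2 * (n : ℝ)) * x ^ (2 * n - 1)))) := by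
  set r := (1 + |x|) / 2 with hrdef
  have hx0 := abs_nonneg x
  have hr0 : 0 < r := by rw [hrdef]; linarith
  have hrx : |x| ≤ r := by rw [hrdef]; linarith
  have hr1 : |r| < 1 := by rw [abs_of_nonneg hr0.le, hrdef]; linarith
  exact Summable.of_norm (Summable.of_nonneg_of_le (fun n => norm_nonneg _)
    (fun n => bound2 a hr0 n hrx) (u2_summable hr1 a))

lemma summable_sq_terms (a : ℕ) {x : ℝ} (hx : |x| < 1) :
    Summable (fun n : ℕ => cc a n * ((2 * (n : ℝ) + 1) ^ 2 * x ^ (2 * n + 1))) := by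
  have hb : ∀ n : ℕ, ‖cc a n * ((2 * (n : ℝ) + 1) ^ 2 * x ^ (2 * n + 1))‖
      ≤ (2:ℝ) ^ a * (4 * (((n : ℝ) + 1) ^ 2 * (x ^ 2) ^ n)) := by
    intro n
    rw [Real.norm_eq_abs, abs_mul, abs_mul, abs_pow, abs_pow,
      abs_of_nonneg (cc_nonneg a n),
      abs_of_nonneg (show (0:ℝ) ≤ 2 * (n:ℝ) + 1 by positivity)]
    have h1 : |x| ^ (2 * n + 1) ≤ (x ^ 2) ^ n := by
      calc |x| ^ (2 * n + 1) ≤ |x| ^ (2 * n) := by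
            rw [pow_succ]
            nlinarith [pow_nonneg (abs_nonneg x) (2 * n), abs_nonneg x,
              pow_le_one₀ (abs_nonneg x) hx.le (n := 2 * n)]
        _ = (x ^ 2) ^ n := by rw [pow_mul, sq_abs]
    calc cc a n * ((2 * (n:ℝ) + 1) ^ 2 * |x| ^ (2 * n + 1))
        ≤ 2 ^ a * ((2 * ((n:ℝ) + 1)) ^ 2 * (x ^ 2) ^ n) := by
          apply mul_le_mul (cc_le a n) _ (by positivity) (by positivity)
          apply mul_le_mul _ h1 (by positivity) (by positivity)
          apply pow_le_pow_left₀ (by positivity) (by linarith [Nat.cast_nonneg (α := ℝ) n])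
      _ = 2 ^ a * (4 * (((n:ℝ) + 1) ^ 2 * (x ^ 2) ^ n)) := by ring
  exact Summable.of_norm (Summable.of_nonneg_of_le (fun n => norm_nonneg _) hb
    (((summable_np1 2 (sq_abs_lt hx)).mul_left 4).mul_left ((2:ℝ) ^ a)))

/- ### termwise differentiation -/

lemma hasDerivAt_term (a n : ℕ) (y : ℝ) :
    HasDerivAt (fun z : ℝ => cc a n * z ^ (2 * n + 1))
      (cc a n * ((2 * (n : ℝ) + 1) * y ^ (2 * n))) y := by
  have h := (hasDerivAt_pow (2 * n + 1) y).const_mul (cc a n)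
  rw [show 2 * n + 1 - 1 = 2 * n from by omega] at h
  refine h.congr_deriv ?_
  push_cast
  ring

lemma hasDerivAt_term1 (a n : ℕ) (y : ℝ) :
    HasDerivAt (fun z : ℝ => cc a n * ((2 * (n : ℝ) + 1) * z ^ (2 * n)))
      (cc a n * ((2 * (n : ℝ) + 1) * ((2 * (n : ℝ)) * y ^ (2 * n - 1)))) y := by
  have h := (hasDerivAt_pow (2 * n) y).const_mul (cc a n * (2 * (n : ℝ) + 1))
  have hfun : (fun z : ℝ => cc a n * ((2 * (n:ℝ) + 1) * z ^ (2 * n)))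
      = fun z : ℝ => (cc a n * (2 * (n:ℝ) + 1)) * z ^ (2 * n) := by
    funext z; ring
  rw [hfun]
  refine h.congr_deriv ?_
  push_cast
  ring

lemma hasDerivAt_F (a : ℕ) {x : ℝ} (hx : |x| < 1) : HasDerivAt (F a) (F1 a x) x := by
  set r := (1 + |x|) / 2 with hrdef
  have hx0 := abs_nonneg x
  have hr0 : 0 < r := by rw [hrdef]; linarith
  have hrx : |x| < r := by rw [hrdef]; linarith
  have hr1 : |r| < 1 := by rw [abs_of_nonneg hr0.le, hrdef]; linarith
  have h0mem : (0:ℝ) ∈ Set.Ioo (-r) r := by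
    rw [Set.mem_Ioo]; constructor <;> linarith
  have hxmem : x ∈ Set.Ioo (-r) r := by
    rw [Set.mem_Ioo]; exact abs_lt.1 hrx
  exact hasDerivAt_tsum_of_isPreconnected (u1_summable hr1 a) isOpen_Ioo isPreconnected_Ioo
    (fun n y _ => hasDerivAt_term a n y)
    (fun n y hy => bound1 a n (by rw [abs_le]; exact ⟨hy.1.le, hy.2.le⟩))
    h0mem
    (Summable.congr summable_zero (fun n => by
      rw [zero_pow (by omega : 2 * n + 1 ≠ 0), mul_zero]))
    hxmem

lemma hasDerivAt_F1 (a : ℕ) {x : ℝ} (hx : |x| < 1) : HasDerivAt (F1 a) (F2 a x) x := by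
  set r := (1 + |x|) / 2 with hrdef
  have hx0 := abs_nonneg x
  have hr0 : 0 < r := by rw [hrdef]; linarith
  have hrx : |x| < r := by rw [hrdef]; linarith
  have hr1 : |r| < 1 := by rw [abs_of_nonneg hr0.le, hrdef]; linarith
  have h0mem : (0:ℝ) ∈ Set.Ioo (-r) r := by
    rw [Set.mem_Ioo]; constructor <;> linarith
  have hxmem : x ∈ Set.Ioo (-r) r := by
    rw [Set.mem_Ioo]; exact abs_lt.1 hrx
  exact hasDerivAt_tsum_of_isPreconnected (u2_summable hr1 a) isOpen_Ioo isPreconnected_Ioo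
    (fun n y _ => hasDerivAt_term1 a n y)
    (fun n y hy => bound2 a hr0 n (by rw [abs_le]; exact ⟨hy.1.le, hy.2.le⟩))
    h0mem
    (summable_of_ne_finset_zero (s := {0}) (fun n hn => by
      have : n ≠ 0 := by simpa using hn
      rw [zero_pow (by omega : 2 * n ≠ 0), mul_zero, mul_zero]))
    hxmem

/- ### the key series identity -/

lemma F2_term_zero (a : ℕ) (x : ℝ) :
    cc a 0 * ((2 * ((0:ℕ) : ℝ) + 1) * ((2 * ((0:ℕ) : ℝ)) * x ^ (2 * 0 - 1))) = 0 := by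
  norm_num

lemma key (a : ℕ) {x : ℝ} (hx : |x| < 1) :
    (1 - x ^ 2) * F2 a x - x * F1 a x = Fp a x := by
  have hS2 := summable_F2_terms a hx
  have hS1 := summable_F1_terms a hx
  have hSq := summable_sq_terms a hx
  calc (1 - x ^ 2) * F2 a x - x * F1 a x
      = ∑' n : ℕ, ((1 - x ^ 2) * (cc a n * ((2 * (n:ℝ) + 1) * ((2 * (n:ℝ)) * x ^ (2 * n - 1))))
          - x * (cc a n * ((2 * (n:ℝ) + 1) * x ^ (2 * n)))) := by
        rw [F2, F1, ← tsum_mul_left, ← tsum_mul_left,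
          Summable.tsum_sub (hS2.mul_left _) (hS1.mul_left _)]
    _ = ∑' n : ℕ, (cc a n * ((2 * (n:ℝ) + 1) * ((2 * (n:ℝ)) * x ^ (2 * n - 1)))
          - cc a n * ((2 * (n:ℝ) + 1) ^ 2 * x ^ (2 * n + 1))) := by
        apply tsum_congr
        intro n
        cases n with
        | zero => norm_num; ring
        | succ m =>
          have hpow : x ^ (2 * (m + 1) - 1) * x ^ 2 = x ^ (2 * (m + 1) + 1) := by
            rw [← pow_add, show 2 * (m + 1) - 1 + 2 = 2 * (m + 1) + 1 from by omega]
          push_cast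
          linear_combination (-(cc a (m+1) * ((2 * ((m:ℝ)+1) + 1) * (2 * ((m:ℝ)+1))))) * hpow
    _ = (∑' n : ℕ, cc a n * ((2 * (n:ℝ) + 1) * ((2 * (n:ℝ)) * x ^ (2 * n - 1))))
          - ∑' n : ℕ, cc a n * ((2 * (n:ℝ) + 1) ^ 2 * x ^ (2 * n + 1)) := Summable.tsum_sub hS2 hSq
    _ = (∑' n : ℕ, cc a (n+1) * ((2 * ((n+1:ℕ):ℝ) + 1) * ((2 * ((n+1:ℕ):ℝ)) * x ^ (2 * (n+1) - 1))))
          - ∑' n : ℕ, cc a n * ((2 * (n:ℝ) + 1) ^ 2 * x ^ (2 * n + 1)) := by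
        rw [Summable.tsum_eq_zero_add hS2, F2_term_zero, zero_add]
    _ = ∑' n : ℕ, (cc a (n+1) * ((2 * ((n+1:ℕ):ℝ) + 1) * ((2 * ((n+1:ℕ):ℝ)) * x ^ (2 * (n+1) - 1)))
          - cc a n * ((2 * (n:ℝ) + 1) ^ 2 * x ^ (2 * n + 1))) :=
        (Summable.tsum_sub ((summable_nat_add_iff 1).2 hS2) hSq).symm
    _ = ∑' n : ℕ, ccp a n * x ^ (2 * n + 1) := by
        apply tsum_congr
        intro n
        have hrec := cc_rec a n
        have hexp : 2 * (n + 1) - 1 = 2 * n + 1 := by omega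
        rw [hexp]
        push_cast
        linear_combination x ^ (2 * n + 1) * hrec
    _ = Fp a x := rfl


/- ### the arcsin side -/

lemma hasDerivAt_invsqrt {x : ℝ} (hx : |x| < 1) :
    HasDerivAt (fun y : ℝ => (Real.sqrt (1 - y ^ 2))⁻¹)
      (x / (Real.sqrt (1 - x ^ 2) * (1 - x ^ 2))) x := by
  have hx2 : x ^ 2 < 1 := by nlinarith [abs_nonneg x, sq_abs x]
  have hpos : 0 < 1 - x ^ 2 := by linarith
  have hs : 0 < Real.sqrt (1 - x ^ 2) := Real.sqrt_pos.2 hpos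
  have hinner : HasDerivAt (fun y : ℝ => 1 - y ^ 2) (-(2 * x)) x := by
    simpa using (hasDerivAt_pow 2 x).const_sub 1
  have hsqrt : HasDerivAt (fun y : ℝ => Real.sqrt (1 - y ^ 2))
      (-(2 * x) / (2 * Real.sqrt (1 - x ^ 2))) x := hinner.sqrt (ne_of_gt hpos)
  have h := hsqrt.inv (ne_of_gt hs)
  refine h.congr_deriv ?_
  have hss : Real.sqrt (1 - x ^ 2) ^ 2 = 1 - x ^ 2 := Real.sq_sqrt hpos.le
  rw [hss]
  field_simp

lemma hasDerivAt_arcsin_pow (m : ℕ) {x : ℝ} (hx : |x| < 1) :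
    HasDerivAt (fun y : ℝ => Real.arcsin y ^ (m + 1) / (Nat.factorial (m + 1)))
      (Real.arcsin x ^ m / (Nat.factorial m) * (Real.sqrt (1 - x ^ 2))⁻¹) x := by
  have h1 : x ≠ -1 := by intro h; rw [h] at hx; norm_num at hx
  have h2 : x ≠ 1 := by intro h; rw [h] at hx; norm_num at hx
  have h := ((hasDerivAt_arcsin h1 h2).pow (m + 1)).div_const ((Nat.factorial (m + 1) : ℝ))
  refine h.congr_deriv ?_
  rw [show m + 1 - 1 = m from by omega, Nat.factorial_succ]
  have hf : (Nat.factorial m : ℝ) ≠ 0 := Nat.cast_ne_zero.2 (Nat.factorial_ne_zero m)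
  have hm : ((m : ℝ) + 1) ≠ 0 := by positivity
  have hx2 : x ^ 2 < 1 := by nlinarith [abs_nonneg x, sq_abs x]
  have hpos : 0 < 1 - x ^ 2 := by linarith
  have hsne : Real.sqrt (1 - x ^ 2) ≠ 0 := ne_of_gt (Real.sqrt_pos.2 hpos)
  push_cast
  field_simp

lemma hasDerivAt_S (a : ℕ) {x : ℝ} (hx : |x| < 1) : HasDerivAt (S a) (S1 a x) x :=
  hasDerivAt_arcsin_pow (2 * a) hx

lemma hasDerivAt_S1 (a : ℕ) {x : ℝ} (hx : |x| < 1) : HasDerivAt (S1 a) (S2 a x) x := by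
  have hx2 : x ^ 2 < 1 := by nlinarith [abs_nonneg x, sq_abs x]
  have hpos : 0 < 1 - x ^ 2 := by linarith
  have hs : 0 < Real.sqrt (1 - x ^ 2) := Real.sqrt_pos.2 hpos
  have hss : Real.sqrt (1 - x ^ 2) * Real.sqrt (1 - x ^ 2) = 1 - x ^ 2 :=
    Real.mul_self_sqrt hpos.le
  have hA : HasDerivAt (fun y : ℝ => Real.arcsin y ^ (2 * a) / (Nat.factorial (2 * a)))
      ((if a = 0 then 0 else Real.arcsin x ^ (2 * a - 1) / (Nat.factorial (2 * a - 1)))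
        * (Real.sqrt (1 - x ^ 2))⁻¹) x := by
    cases a with
    | zero =>
      have hz : ((if (0:ℕ) = 0 then (0:ℝ)
          else Real.arcsin x ^ (2 * 0 - 1) / (Nat.factorial (2 * 0 - 1)))
            * (Real.sqrt (1 - x ^ 2))⁻¹) = 0 := by norm_num
      rw [hz]
      apply (hasDerivAt_const x (1:ℝ)).congr_of_eventuallyEq
      filter_upwards with y
      norm_num
    | succ b =>
      have h := hasDerivAt_arcsin_pow (2 * b + 1) hx
      rw [if_neg (Nat.succ_ne_zero b)]
      rw [show 2 * (b + 1) - 1 = 2 * b + 1 from by omega,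
        show 2 * (b + 1) = 2 * b + 1 + 1 from by omega]
      exact h
  have h := hA.mul (hasDerivAt_invsqrt hx)
  have hfun : S1 a = fun y : ℝ =>
      (Real.arcsin y ^ (2 * a) / (Nat.factorial (2 * a))) * (Real.sqrt (1 - y ^ 2))⁻¹ := rfl
  rw [hfun]
  refine h.congr_deriv ?_
  rw [S2]
  have hsne : Real.sqrt (1 - x ^ 2) ≠ 0 := ne_of_gt hs
  have hpne : (1 - x ^ 2) ≠ 0 := ne_of_gt hpos
  field_simp
  linear_combination (-((if a = 0 then 0 else Real.arcsin x ^ (2 * a - 1) / (Nat.factorial (2 * a - 1))) * (Nat.factorial (2 * a) : ℝ))) * hss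

lemma keyS (a : ℕ) {x : ℝ} (hx : |x| < 1) :
    (1 - x ^ 2) * S2 a x - x * S1 a x = Sp a x := by
  have hx2 : x ^ 2 < 1 := by nlinarith [abs_nonneg x, sq_abs x]
  have hpos : 0 < 1 - x ^ 2 := by linarith
  have hs : 0 < Real.sqrt (1 - x ^ 2) := Real.sqrt_pos.2 hpos
  have hsne : Real.sqrt (1 - x ^ 2) ≠ 0 := ne_of_gt hs
  have hpne : (1 - x ^ 2) ≠ 0 := ne_of_gt hpos
  rw [S2, S1, Sp]
  cases a with
  | zero =>
    rw [if_pos rfl, if_pos rfl]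
    field_simp
    ring
  | succ b =>
    rw [if_neg (Nat.succ_ne_zero b), if_neg (Nat.succ_ne_zero b), S]
    rw [show 2 * (b + 1) - 1 = 2 * b + 1 from by omega,
      show 2 * (b + 1 - 1) + 1 = 2 * b + 1 from by omega]
    field_simp
    ring

/- ### constancy from zero derivative on the interval -/

lemma eq_of_hasDerivAt_zero {f : ℝ → ℝ} (h : ∀ y ∈ Set.Ioo (-1:ℝ) 1, HasDerivAt f 0 y)
    {x : ℝ} (hx : x ∈ Set.Ioo (-1:ℝ) 1) : f x = f 0 := by
  have h0 : (0:ℝ) ∈ Set.Ioo (-1:ℝ) 1 := by constructor <;> norm_num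
  apply (convex_Ioo (-1:ℝ) 1).is_const_of_fderivWithin_eq_zero (𝕜 := ℝ)
    (fun y hy => ((h y hy).differentiableAt).differentiableWithinAt) ?_ hx h0
  intro y hy
  rw [fderivWithin_of_isOpen isOpen_Ioo hy, ((h y hy).hasFDerivAt).fderiv]
  refine ContinuousLinearMap.ext fun z => ?_
  simp

/- ### main identity on the open interval -/

lemma F1_zero (a : ℕ) : F1 a 0 = cc a 0 := by
  rw [F1]
  rw [tsum_eq_single 0 (fun n hn => by
    rw [zero_pow (by omega : 2 * n ≠ 0), mul_zero, mul_zero])]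
  norm_num

lemma S1_zero (a : ℕ) : S1 a 0 = if a = 0 then 1 else 0 := by
  rw [S1]
  cases a with
  | zero => norm_num
  | succ b =>
    rw [if_neg (Nat.succ_ne_zero b)]
    rw [Real.arcsin_zero, zero_pow (by omega : 2 * (b + 1) ≠ 0)]
    norm_num

lemma F_zero (a : ℕ) : F a 0 = 0 := by
  rw [F]
  rw [show (fun n : ℕ => cc a n * (0:ℝ) ^ (2 * n + 1)) = fun _ => (0:ℝ) from
    funext fun n => by rw [zero_pow (by omega : 2 * n + 1 ≠ 0), mul_zero]]
  exact tsum_zero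

lemma S_zero (a : ℕ) : S a 0 = 0 := by
  rw [S, Real.arcsin_zero, zero_pow (by omega : 2 * a + 1 ≠ 0), zero_div]

lemma aux (A : ℕ) (hprev : ∀ x ∈ Set.Ioo (-1:ℝ) 1, Fp A x = Sp A x) :
    ∀ x ∈ Set.Ioo (-1:ℝ) 1, F A x = S A x := by
  have habs : ∀ y : ℝ, y ∈ Set.Ioo (-1:ℝ) 1 → |y| < 1 := fun y hy => abs_lt.2 ⟨hy.1, hy.2⟩
  have hcomb : ∀ y ∈ Set.Ioo (-1:ℝ) 1,
      (1 - y ^ 2) * (F2 A y - S2 A y) - y * (F1 A y - S1 A y) = 0 := by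
    intro y hy
    have h1 := key A (habs y hy)
    have h2 := keyS A (habs y hy)
    have h3 := hprev y hy
    linear_combination h1 - h2 + h3
  have hE : ∀ y ∈ Set.Ioo (-1:ℝ) 1,
      HasDerivAt (fun z => (1 - z ^ 2) * (F1 A z - S1 A z) ^ 2) 0 y := by
    intro y hy
    have hd1 : HasDerivAt (fun z => F1 A z - S1 A z) (F2 A y - S2 A y) y :=
      (hasDerivAt_F1 A (habs y hy)).sub (hasDerivAt_S1 A (habs y hy))
    have hq : HasDerivAt (fun z : ℝ => 1 - z ^ 2) (-(2 * y)) y := by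
      simpa using (hasDerivAt_pow 2 y).const_sub 1
    have h := hq.mul (hd1.pow 2)
    refine h.congr_deriv ?_
    rw [show 2 - 1 = 1 from rfl, pow_one]
    push_cast
    simp only [Pi.pow_apply]
    linear_combination (2 * (F1 A y - S1 A y)) * (hcomb y hy)
  have hD10 : F1 A 0 - S1 A 0 = 0 := by
    rw [F1_zero, S1_zero, cc_zero]
    cases A <;> norm_num
  have hD1 : ∀ y ∈ Set.Ioo (-1:ℝ) 1, F1 A y - S1 A y = 0 := by
    intro y hy
    have h := eq_of_hasDerivAt_zero hE hy
    rw [hD10] at h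
    norm_num at h
    have hypos : 0 < 1 - y ^ 2 := by nlinarith [habs y hy, abs_nonneg y, sq_abs y]
    rcases h with h | h
    · linarith
    · exact h
  have hD : ∀ y ∈ Set.Ioo (-1:ℝ) 1, HasDerivAt (fun z => F A z - S A z) 0 y := by
    intro y hy
    have h := (hasDerivAt_F A (habs y hy)).sub (hasDerivAt_S A (habs y hy))
    rwa [hD1 y hy] at h
  intro x hx
  have h := eq_of_hasDerivAt_zero hD hx
  rw [F_zero, S_zero] at h
  linarith [h]

lemma main (a : ℕ) : ∀ x ∈ Set.Ioo (-1:ℝ) 1, F a x = S a x := by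
  induction a with
  | zero =>
    apply aux 0
    intro x hx
    rw [Fp, Sp, if_pos rfl]
    rw [show (fun n : ℕ => ccp 0 n * x ^ (2 * n + 1)) = fun _ => (0:ℝ) from
      funext fun n => by rw [ccp, if_pos rfl, zero_mul]]
    exact tsum_zero
  | succ b ih =>
    apply aux (b + 1)
    intro x hx
    have h1 : Fp (b + 1) x = F b x := by
      rw [Fp, F]
      apply tsum_congr
      intro n
      rw [ccp, if_neg (Nat.succ_ne_zero b), Nat.succ_sub_one]
    rw [h1, Sp, if_neg (Nat.succ_ne_zero b), Nat.succ_sub_one]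
    exact ih x hx

/- ### continuity up to the boundary -/

lemma contF (a : ℕ) : ContinuousOn (F a) (Set.Icc (-1:ℝ) 1) := by
  apply (tendstoUniformlyOn_tsum (summable_cc a) ?_).continuousOn
  · refine Filter.Eventually.frequently ?_
    filter_upwards with t
    apply Continuous.continuousOn
    exact continuous_finset_sum t fun n _ => by fun_prop
  · intro n y hy
    rw [Real.norm_eq_abs, abs_mul, abs_pow, abs_of_nonneg (cc_nonneg a n)]
    have hy1 : |y| ≤ 1 := abs_le.2 ⟨hy.1, hy.2⟩
    calc cc a n * |y| ^ (2 * n + 1) ≤ cc a n * 1 :=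
          mul_le_mul_of_nonneg_left (pow_le_one₀ (abs_nonneg y) hy1) (cc_nonneg a n)
      _ = cc a n := mul_one _

lemma contS (a : ℕ) : Continuous (S a) :=
  (Real.continuous_arcsin.pow _).div_const _

lemma main' (a : ℕ) {x : ℝ} (hx : |x| ≤ 1) : F a x = S a x := by
  rcases lt_or_eq_of_le hx with h | h
  · exact main a x (Set.mem_Ioo.2 (abs_lt.1 h))
  · have hx1 : x ∈ Set.Icc (-1:ℝ) 1 := abs_le.1 hx
    have hclos : x ∈ closure (Set.Ioo (-1:ℝ) 1) := by
      rw [closure_Ioo (by norm_num : (-1:ℝ) ≠ 1)]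
      exact hx1
    have hne : (nhdsWithin x (Set.Ioo (-1:ℝ) 1)).NeBot :=
      mem_closure_iff_nhdsWithin_neBot.1 hclos
    have hFt : Filter.Tendsto (F a) (nhdsWithin x (Set.Ioo (-1:ℝ) 1)) (nhds (F a x)) :=
      (contF a x hx1).mono Set.Ioo_subset_Icc_self
    have hS : Filter.Tendsto (S a) (nhdsWithin x (Set.Ioo (-1:ℝ) 1)) (nhds (S a x)) :=
      ((contS a).tendsto x).mono_left nhdsWithin_le_nhds
    have heq : S a =ᶠ[nhdsWithin x (Set.Ioo (-1:ℝ) 1)] F a := by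
      filter_upwards [self_mem_nhdsWithin] with y hy
      exact (main a y hy).symm
    exact tendsto_nhds_unique hFt (hS.congr' heq)

end ArcsinAux

theorem arcsin_odd_powers (a : ℕ) (x : ℝ) (hx : |x| ≤ 1) :
    Real.arcsin x ^ (2 * a + 1) / (Nat.factorial (2 * a + 1)) =
      ∑' n : ℕ, ((Nat.choose (2 * n) n : ℝ) / ((2 * (n : ℝ) + 1) * 4 ^ n)) *
        x ^ (2 * n + 1) * tHead a n := by
  have h1 : (∑' n : ℕ, ((Nat.choose (2 * n) n : ℝ) / ((2 * (n : ℝ) + 1) * 4 ^ n)) *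
      x ^ (2 * n + 1) * tHead a n) = ArcsinAux.F a x := by
    apply tsum_congr
    intro n
    rw [ArcsinAux.tHead_eq_T]
    show _ = ArcsinAux.cc a n * x ^ (2 * n + 1)
    rw [ArcsinAux.cc, ArcsinAux.bb]
    ring
  rw [h1, ArcsinAux.main' a hx]
  rfl
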